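/- There exists a constant C > 0 such that for every integer L ≥ 8 divisible by 4, the double sum ∑_{j=1}^{L/4} ∑_{k=j+1}^{L/2−j} 1/(cos(2πj/L) − cos(2πk/L)) is at most C·L²·(log L)². -/

import Mathlib

open Real Finset

private lemma aux_sum_inv_le {n L : ℕ} (hn : n ≤ L) :
    ∑ i ∈ Finset.Icc 1 n, (i : ℝ)⁻¹ ≤ 1 + Real.log L := by
  have h := harmonic_le_one_add_log n
  rw [harmonic_eq_sum_Icc] at h
  push_cast at h
  refine h.trans (add_le_add_right ?_ 1)
  rcases Nat.eq_zero_or_pos n with h0 | h0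
  · simp only [h0, Nat.cast_zero, Real.log_zero]
    exact Real.log_natCast_nonneg L
  · exact Real.log_le_log (by exact_mod_cast h0) (by exact_mod_cast hn)

private lemma aux_reindex (j n : ℕ) :
    ∑ k ∈ Finset.Icc (j + 1) (j + n), ((k : ℝ) - j)⁻¹ = ∑ i ∈ Finset.Icc 1 n, (i : ℝ)⁻¹ := by
  have : Finset.Icc (j + 1) (j + n) = (Finset.Icc 1 n).map (addRightEmbedding j) := by
    rw [Finset.map_add_right_Icc]
    congr 1 <;> omega
  rw [this, Finset.sum_map]
  refine Finset.sum_congr rfl fun i _ => ?_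
  simp only [addRightEmbedding_apply]
  push_cast
  ring_nf

private lemma aux_cos (a b : ℝ) (ha0 : 0 ≤ a) (hb0 : 0 ≤ b) (ha : a ≤ π / 2)
    (hb : b ≤ π / 2) :
    2 * (2 / π * a) * (2 / π * b) ≤ Real.cos (a - b) - Real.cos (a + b) := by
  rw [Real.cos_sub_cos]
  have h1 : (a - b + (a + b)) / 2 = a := by ring
  have h2 : (a - b - (a + b)) / 2 = -b := by ring
  rw [h1, h2, Real.sin_neg]
  have s1 := Real.mul_le_sin ha0 ha
  have s2 := Real.mul_le_sin hb0 hb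
  have hu : (0:ℝ) ≤ 2 / π * a := by positivity
  have hv : (0:ℝ) ≤ 2 / π * b := by positivity
  have := mul_le_mul s1 s2 hv (le_trans hu s1)
  nlinarith

/-- There is a constant `C > 0` such that for every integer `L ≥ 8` divisible by 4,
`∑_{j=1}^{L/4} ∑_{k=j+1}^{L/2−j} 1/(cos(2πj/L) − cos(2πk/L)) ≤ C·L²·(log L)²`. -/
theorem stmt_10 :
    ∃ C : ℝ, 0 < C ∧ ∀ L : ℕ, 8 ≤ L → 4 ∣ L →
      ∑ j ∈ Finset.Icc 1 (L / 4), ∑ k ∈ Finset.Icc (j + 1) (L / 2 - j),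
          (Real.cos (2 * Real.pi * j / L) - Real.cos (2 * Real.pi * k / L))⁻¹
        ≤ C * (L : ℝ) ^ 2 * Real.log L ^ 2 := by
  refine ⟨1, one_pos, fun L hL h4 => ?_⟩
  have hLR : (8:ℝ) ≤ (L:ℝ) := by exact_mod_cast hL
  have hL0 : (0:ℝ) < L := by linarith
  have hπ := Real.pi_pos
  have hlog1 : (1:ℝ) ≤ Real.log L := by
    rw [Real.le_log_iff_exp_le hL0]
    calc Real.exp 1 ≤ 2.7182818286 := Real.exp_one_lt_d9.le
      _ ≤ 8 := by norm_num
      _ ≤ (L:ℝ) := hLR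
  have key : ∀ j ∈ Finset.Icc 1 (L / 4), ∀ k ∈ Finset.Icc (j + 1) (L / 2 - j),
      (Real.cos (2 * π * j / L) - Real.cos (2 * π * k / L))⁻¹
        ≤ (L:ℝ)^2 / 16 * (j:ℝ)⁻¹ * ((k:ℝ) - j)⁻¹ := by
    intro j hj k hk
    rw [Finset.mem_Icc] at hj hk
    have n1 : 2 * (j + k) ≤ L := by omega
    have n2 : 2 * k ≤ L := by omega
    have hjk : (j:ℝ) < k := by exact_mod_cast (by omega : j < k)
    have hj1 : (1:ℝ) ≤ j := by exact_mod_cast hj.1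
    have n1' : 2 * ((j:ℝ) + k) ≤ L := by exact_mod_cast n1
    have n2' : 2 * (k:ℝ) ≤ L := by exact_mod_cast n2
    set a : ℝ := π * ((j:ℝ) + k) / L with ha_def
    set b : ℝ := π * ((k:ℝ) - j) / L with hb_def
    have ha0 : 0 ≤ a := by positivity
    have hb0 : 0 ≤ b := by
      apply div_nonneg _ hL0.le
      nlinarith
    have ha : a ≤ π / 2 := by
      rw [ha_def, div_le_div_iff₀ hL0 (by norm_num : (0:ℝ) < 2)]
      nlinarith
    have hb : b ≤ π / 2 := by
      rw [hb_def, div_le_div_iff₀ hL0 (by norm_num : (0:ℝ) < 2)]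
      nlinarith
    have hcos := aux_cos a b ha0 hb0 ha hb
    have hx : a - b = 2 * π * (j:ℝ) / L := by rw [ha_def, hb_def]; ring
    have hy : a + b = 2 * π * (k:ℝ) / L := by rw [ha_def, hb_def]; ring
    rw [hx, hy] at hcos
    have hval : 2 * (2 / π * a) * (2 / π * b)
        = 8 * ((j:ℝ) + k) * ((k:ℝ) - j) / (L:ℝ)^2 := by
      rw [ha_def, hb_def]
      field_simp
      ring
    have hd : 16 * (j:ℝ) * ((k:ℝ) - j) / (L:ℝ)^2
        ≤ Real.cos (2 * π * j / L) - Real.cos (2 * π * k / L) := by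
      refine le_trans ?_ (hval ▸ hcos)
      gcongr ?_ / _
      nlinarith
    have hpos : (0:ℝ) < 16 * (j:ℝ) * ((k:ℝ) - j) / (L:ℝ)^2 := by
      have : (0:ℝ) < (k:ℝ) - j := by linarith
      positivity
    have hinv := inv_anti₀ hpos hd
    refine hinv.trans (le_of_eq ?_)
    have h1 : (j:ℝ) ≠ 0 := by linarith
    have h2 : (k:ℝ) - j ≠ 0 := by linarith [hjk]
    field_simp
  calc ∑ j ∈ Finset.Icc 1 (L / 4), ∑ k ∈ Finset.Icc (j + 1) (L / 2 - j),
        (Real.cos (2 * π * j / L) - Real.cos (2 * π * k / L))⁻¹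
      ≤ ∑ j ∈ Finset.Icc 1 (L / 4), ∑ k ∈ Finset.Icc (j + 1) (L / 2 - j),
        (L:ℝ)^2 / 16 * (j:ℝ)⁻¹ * ((k:ℝ) - j)⁻¹ :=
      Finset.sum_le_sum fun j hj => Finset.sum_le_sum fun k hk => key j hj k hk
    _ ≤ ∑ j ∈ Finset.Icc 1 (L / 4), (L:ℝ)^2 / 16 * (j:ℝ)⁻¹ * (1 + Real.log L) := by
      refine Finset.sum_le_sum fun j hj => ?_
      rw [Finset.mem_Icc] at hj
      have hs : ∑ k ∈ Finset.Icc (j + 1) (L / 2 - j), ((k:ℝ) - j)⁻¹ ≤ 1 + Real.log L := by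
        have hidx : L / 2 - j = j + (L / 2 - 2 * j) := by omega
        rw [hidx, aux_reindex]
        exact aux_sum_inv_le (by omega)
      have hc : (0:ℝ) ≤ (L:ℝ)^2 / 16 * (j:ℝ)⁻¹ := by positivity
      calc ∑ k ∈ Finset.Icc (j + 1) (L / 2 - j), (L:ℝ)^2 / 16 * (j:ℝ)⁻¹ * ((k:ℝ) - j)⁻¹
          = (L:ℝ)^2 / 16 * (j:ℝ)⁻¹ * ∑ k ∈ Finset.Icc (j + 1) (L / 2 - j), ((k:ℝ) - j)⁻¹ := by
            rw [Finset.mul_sum]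
        _ ≤ _ := mul_le_mul_of_nonneg_left hs hc
    _ = (L:ℝ)^2 / 16 * (1 + Real.log L) * ∑ j ∈ Finset.Icc 1 (L / 4), (j:ℝ)⁻¹ := by
      rw [Finset.mul_sum]
      exact Finset.sum_congr rfl fun j _ => by ring
    _ ≤ (L:ℝ)^2 / 16 * (1 + Real.log L) * (1 + Real.log L) := by
      refine mul_le_mul_of_nonneg_left (aux_sum_inv_le (by omega)) ?_
      positivity
    _ ≤ 1 * (L:ℝ)^2 * Real.log L ^ 2 := by
      have h2g : 1 + Real.log L ≤ 2 * Real.log L := by linarith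
      have hg0 : (0:ℝ) ≤ 1 + Real.log L := by linarith
      nlinarith [mul_le_mul h2g h2g hg0 (by linarith), sq_nonneg (L:ℝ), sq_nonneg (Real.log L)]
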